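/- Let K be a totally real number field of degree n, O its ring of integers, Γ = SL₂(O), and for an ideal I with N(I) ≥ 40^{n/2}, let M_I = (ℍ²)ⁿ/Γ(I). Then every noncontractible closed geodesic α in M_I has length ℓ(α) ≥ (4/√n)·log(N(I)) − 2√n·log(40); combined with [Γ:Γ(I)] < N(I)³, this yields sys π₁(M_I) ≥ (4/(3√n))·log([Γ:Γ(I)]) − 2√n·log(40). -/

import Mathlib

set_option maxHeartbeats 1000000
set_option synthInstance.maxHeartbeats 400000

open Matrix MatrixGroups

section Counting

variable {R : Type*} [CommRing R] [Finite R]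

lemma aux_sl2_card_lt (h2 : 2 ≤ Nat.card R) :
    Nat.card (SpecialLinearGroup (Fin 2) R) < Nat.card R ^ 3 := by
  classical
  have hnt : Nontrivial R := Finite.one_lt_card_iff_nontrivial.mp h2
  haveI := Fintype.ofFinite R
  set pick : R × R → R × R := fun p =>
    if h : ∃ q : R × R, q.1 * p.1 + q.2 * p.2 = 1 then h.choose else 0 with hpickdef
  have hpick : ∀ p : R × R, (∃ q : R × R, q.1 * p.1 + q.2 * p.2 = 1) →
      (pick p).1 * p.1 + (pick p).2 * p.2 = 1 := by
    intro p h
    simp only [hpickdef, dif_pos h]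
    exact h.choose_spec
  have hrow : ∀ A : SpecialLinearGroup (Fin 2) R, ((A 0 0, A 0 1) : R × R) ≠ 0 := by
    intro A hA
    have hdet : A 0 0 * A 1 1 - A 0 1 * A 1 0 = 1 := by
      have := A.prop
      rwa [Matrix.det_fin_two] at this
    rw [Prod.ext_iff] at hA
    simp only [Prod.fst_zero, Prod.snd_zero] at hA
    rw [hA.1, hA.2] at hdet
    simp at hdet
  let f : SpecialLinearGroup (Fin 2) R → R × {p : R × R // p ≠ 0} := fun A =>
    ((pick (A 0 0, A 0 1)).1 * A 1 0 + (pick (A 0 0, A 0 1)).2 * A 1 1,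
      ⟨(A 0 0, A 0 1), hrow A⟩)
  have hinj : Function.Injective f := by
    intro A B hAB
    have hsnd : ((A 0 0, A 0 1) : R × R) = (B 0 0, B 0 1) := by
      have := congrArg (fun p => (p.2 : R × R)) hAB
      simpa [f] using this
    have ha : A 0 0 = B 0 0 := congrArg Prod.fst hsnd
    have hb : A 0 1 = B 0 1 := congrArg Prod.snd hsnd
    have hfst : (pick (A 0 0, A 0 1)).1 * A 1 0 + (pick (A 0 0, A 0 1)).2 * A 1 1
        = (pick (B 0 0, B 0 1)).1 * B 1 0 + (pick (B 0 0, B 0 1)).2 * B 1 1 := by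
      have := congrArg Prod.fst hAB
      simpa [f] using this
    rw [← ha, ← hb] at hfst
    set x := (pick (A 0 0, A 0 1)).1 with hxdef
    set y := (pick (A 0 0, A 0 1)).2 with hydef
    have hdetA : A 0 0 * A 1 1 - A 0 1 * A 1 0 = 1 := by
      have := A.prop; rwa [Matrix.det_fin_two] at this
    have hdetB : B 0 0 * B 1 1 - B 0 1 * B 1 0 = 1 := by
      have := B.prop; rwa [Matrix.det_fin_two] at this
    have hdetB' : A 0 0 * B 1 1 - A 0 1 * B 1 0 = 1 := by
      rw [ha, hb]; exact hdetB
    have hx : x * A 0 0 + y * A 0 1 = 1 := by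
      refine hpick (A 0 0, A 0 1) ⟨(A 1 1, -(A 1 0)), ?_⟩
      simp only
      linear_combination hdetA
    have hc : A 1 0 = B 1 0 := by
      linear_combination (B 1 0 - A 1 0) * hx - y * hdetA + y * hdetB' + A 0 0 * hfst
    have hd : A 1 1 = B 1 1 := by
      linear_combination (B 1 1 - A 1 1) * hx + x * hdetA - x * hdetB' + A 0 1 * hfst
    apply Subtype.ext
    ext i j
    fin_cases i <;> fin_cases j
    · exact ha
    · exact hb
    · exact hc
    · exact hd
  have hcard : Nat.card (SpecialLinearGroup (Fin 2) R)
      ≤ Nat.card (R × {p : R × R // p ≠ 0}) :=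
    Nat.card_le_card_of_injective f hinj
  have hsub : Fintype.card {p : R × R // p ≠ 0} = Fintype.card (R × R) - 1 := by
    rw [Fintype.card_subtype_compl, Fintype.card_subtype_eq]
  have hq : Nat.card (R × {p : R × R // p ≠ 0})
      = Nat.card R * (Nat.card R ^ 2 - 1) := by
    simp only [Nat.card_eq_fintype_card, Fintype.card_prod, hsub]
    congr 1
    · rw [sq]
  have hpos : 0 < Nat.card R := by omega
  have hlt : Nat.card R * (Nat.card R ^ 2 - 1) < Nat.card R ^ 3 := by
    have h1 : (0:ℕ) < Nat.card R ^ 2 := by positivity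
    have h2 : Nat.card R ^ 2 - 1 < Nat.card R ^ 2 := Nat.sub_lt h1 one_pos
    calc Nat.card R * (Nat.card R ^ 2 - 1) < Nat.card R * Nat.card R ^ 2 :=
          mul_lt_mul_of_pos_left h2 hpos
      _ = Nat.card R ^ 3 := by ring
  omega

end Counting

section Geometry

open UpperHalfPlane Complex

lemma aux_cosh_le_exp {x : ℝ} (hx : 0 ≤ x) : Real.cosh x ≤ Real.exp x := by
  rw [Real.cosh_eq]
  have h := Real.exp_le_exp.mpr (neg_le_self hx)
  linarith

lemma aux_trace_le (g : SL(2, ℝ)) (z : ℍ) :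
    |g 0 0 + g 1 1| ≤ 2 * Real.cosh (dist z (g • z) / 2) := by
  set a : ℝ := g 0 0 with hadef
  set b : ℝ := g 0 1 with hbdef
  set c : ℝ := g 1 0 with hcdef
  set d : ℝ := g 1 1 with hddef
  have hdet : a * d - b * c = 1 := by
    have := g.prop
    rwa [Matrix.det_fin_two] at this
  set u : ℂ := a * (z : ℂ) + b with hudef
  set v : ℂ := c * (z : ℂ) + d with hvdef
  have hy : 0 < (z : ℂ).im := z.im_pos
  have hv : v ≠ 0 := by
    intro h
    have h1 : c * (z : ℂ).im = 0 := by
      have := congrArg Complex.im h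
      simpa [hvdef] using this
    have hc0 : c = 0 := by
      rcases mul_eq_zero.mp h1 with h' | h'
      · exact h'
      · exact absurd h' (ne_of_gt hy)
    have hd0 : d = 0 := by
      have := congrArg Complex.re h
      simpa [hvdef, hc0] using this
    rw [hc0, hd0] at hdet
    norm_num at hdet
  have hN : 0 < Complex.normSq v := Complex.normSq_pos.mpr hv
  have hval : ((g • z : ℍ) : ℂ) = u / v := by
    rw [UpperHalfPlane.specialLinearGroup_apply]
    simp [hudef, hvdef]
    rfl
  have hu_im : u.im = a * (z : ℂ).im := by simp [hudef]
  have hu_re : u.re = a * (z : ℂ).re + b := by simp [hudef]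
  have hv_im : v.im = c * (z : ℂ).im := by simp [hvdef]
  have hv_re : v.re = c * (z : ℂ).re + d := by simp [hvdef]
  have him : (g • z).im = z.im / Complex.normSq v := by
    rw [← UpperHalfPlane.coe_im, hval, Complex.div_im, hu_im, hu_re, hv_im, hv_re]
    simp only [UpperHalfPlane.coe_im]
    field_simp
    linear_combination hdet
  have hsqrtN : 0 < Real.sqrt (Complex.normSq v) := Real.sqrt_pos.mpr hN
  have hden : Real.sqrt (z.im * (g • z).im)
      = z.im / Real.sqrt (Complex.normSq v) := by
    rw [him]
    rw [show z.im * (z.im / Complex.normSq v)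
        = z.im ^ 2 / Complex.normSq v from by ring]
    rw [Real.sqrt_div (by positivity) _, Real.sqrt_sq z.im_pos.le]
  have hnum : dist (z : ℂ) ((starRingEnd ℂ) ((g • z : ℍ) : ℂ))
      = ‖(z : ℂ) * (starRingEnd ℂ) v - (starRingEnd ℂ) u‖
        / Real.sqrt (Complex.normSq v) := by
    have hcv : (starRingEnd ℂ) v ≠ 0 := star_ne_zero.mpr hv
    rw [hval, map_div₀, Complex.dist_eq]
    rw [show (z : ℂ) - (starRingEnd ℂ) u / (starRingEnd ℂ) v
        = ((z : ℂ) * (starRingEnd ℂ) v - (starRingEnd ℂ) u) / (starRingEnd ℂ) v from by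
      field_simp]
    rw [norm_div]
    congr 1
    rw [Complex.norm_conj, Complex.norm_def]
  have hcosh := UpperHalfPlane.cosh_half_dist z (g • z)
  rw [hnum, hden] at hcosh
  have hcosh2 : Real.cosh (dist z (g • z) / 2)
      = ‖(z : ℂ) * (starRingEnd ℂ) v - (starRingEnd ℂ) u‖
        / (2 * z.im) := by
    rw [hcosh]
    field_simp
  have hImE : ((z : ℂ) * (starRingEnd ℂ) v - (starRingEnd ℂ) u).im
      = (a + d) * z.im := by
    simp [hudef, hvdef, Complex.mul_im]
    ring
  have habs : |a + d| * z.im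
      ≤ ‖(z : ℂ) * (starRingEnd ℂ) v - (starRingEnd ℂ) u‖ := by
    have h1 := Complex.abs_im_le_norm ((z : ℂ) * (starRingEnd ℂ) v - (starRingEnd ℂ) u)
    rw [hImE, abs_mul, abs_of_pos z.im_pos] at h1
    exact h1
  rw [hcosh2, show 2 * (‖(z : ℂ) * (starRingEnd ℂ) v - (starRingEnd ℂ) u‖
      / (2 * z.im))
      = ‖(z : ℂ) * (starRingEnd ℂ) v - (starRingEnd ℂ) u‖ / z.im from by
    field_simp]
  rw [le_div_iff₀ z.im_pos]
  exact habs

lemma aux_dist_ge (g : SL(2, ℝ)) (z : ℍ) (t : ℝ) (htr : g 0 0 + g 1 1 = 2 + t) :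
    2 * Real.log (|t| / 4) ≤ dist z (g • z) := by
  rcases le_or_gt (|t|) 4 with h | h
  · have h1 : Real.log (|t| / 4) ≤ 0 :=
      Real.log_nonpos (by positivity) (by linarith)
    have h2 : (0:ℝ) ≤ dist z (g • z) := dist_nonneg
    linarith
  · have h2 := aux_trace_le g z
    rw [htr] at h2
    have habs : |t| - |2 + t| ≤ 2 := by
      have := abs_sub_abs_le_abs_sub t (2 + t)
      have h3 : |t - (2 + t)| = 2 := by
        rw [show t - (2 + t) = -2 from by ring]
        norm_num
      linarith
    have h3 : |t| / 4 ≤ Real.cosh (dist z (g • z) / 2) := by linarith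
    have h4 : |t| / 4 ≤ Real.exp (dist z (g • z) / 2) :=
      h3.trans (aux_cosh_le_exp (by positivity))
    have h5 : Real.log (|t| / 4) ≤ dist z (g • z) / 2 := by
      rw [Real.log_le_iff_le_exp (by linarith)]
      exact h4
    linarith

end Geometry

section Norm

open NumberField

lemma aux_prod_embeddings {K : Type*} [Field K] [NumberField K] {n : ℕ}
    (hn : n = Module.finrank ℚ K) (σ : Fin n ≃ (K →+* ℝ)) (t : K) :
    ∏ i, σ i t = (Algebra.norm ℚ t : ℝ) := by
  classical
  let e : (K →+* ℝ) → (K →+* ℂ) := fun φ => Complex.ofRealHom.comp φ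
  have hinj : Function.Injective e := by
    intro φ ψ h
    ext x
    have h1 : Complex.ofRealHom (φ x) = Complex.ofRealHom (ψ x) := RingHom.congr_fun h x
    exact Complex.ofReal_injective h1
  have hbij : Function.Bijective e := by
    rw [Fintype.bijective_iff_injective_and_card]
    refine ⟨hinj, ?_⟩
    rw [NumberField.Embeddings.card K ℂ, ← hn]
    rw [← Fintype.card_fin n]
    exact Fintype.card_congr σ.symm
  have h1 : algebraMap ℚ ℂ (Algebra.norm ℚ t) = ∏ ψ : K →ₐ[ℚ] ℂ, ψ t :=
    Algebra.norm_eq_prod_embeddings ℚ ℂ t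
  have h2 : ∏ ψ : K →ₐ[ℚ] ℂ, ψ t = ∏ φ : K →+* ℂ, φ t := by
    rw [← Fintype.prod_equiv (RingHom.equivRatAlgHom K ℂ) (fun φ => φ t) (fun ψ => ψ t)
      (fun φ => rfl)]
  have h3 : ∏ φ : K →+* ℂ, φ t = ∏ φ : K →+* ℝ, ((φ t : ℝ) : ℂ) :=
    (Fintype.prod_bijective e hbij _ _ (fun φ => rfl)).symm
  have h4 : ∏ φ : K →+* ℝ, ((φ t : ℝ) : ℂ) = ((∏ φ : K →+* ℝ, φ t : ℝ) : ℂ) := by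
    push_cast
    rfl
  have h5 : ∏ i, σ i t = ∏ φ : K →+* ℝ, φ t :=
    Equiv.prod_comp σ (fun φ => φ t)
  have h6 : ((∏ i, σ i t : ℝ) : ℂ) = ((Algebra.norm ℚ t : ℝ) : ℂ) := by
    rw [h5, ← h4, ← h3, ← h2, ← h1]
    rw [show algebraMap ℚ ℂ (Algebra.norm ℚ t) = ((Algebra.norm ℚ t : ℚ) : ℂ) from
      eq_ratCast _ _]
    push_cast
    rfl
  exact_mod_cast h6

end Norm

open NumberField

/-- Main theorem: for `N(I) ≥ 40^{n/2}`, every element `A ∈ Γ(I)` with `y₀ ≠ 0`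
(these are exactly the elements whose translation axes project to the noncontractible
closed geodesics of `M_I = (ℍ²)ⁿ/Γ(I)`) displaces every point of `(ℍ²)ⁿ` by at least
`(4/√n) log N(I) − 2√n log 40`; combined with `[Γ : Γ(I)] < N(I)³` this gives
`sys π₁(M_I) ≥ (4/(3√n)) log [Γ:Γ(I)] − 2√n log 40`. -/
theorem stmt19 (K : Type*) [Field K] [NumberField K]
    (n : ℕ) (hn : n = Module.finrank ℚ K)
    (σ : Fin n ≃ (K →+* ℝ))
    (I : Ideal (NumberField.RingOfIntegers K)) (hI : I ≠ ⊥)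
    (hnorm : (Ideal.absNorm I : ℝ) ≥ 40 ^ ((n : ℝ) / 2)) :
    (Matrix.SpecialLinearGroup.map (n := Fin 2) (Ideal.Quotient.mk I)).ker.index <
      Ideal.absNorm I ^ 3 ∧
    ∀ A : SL(2, NumberField.RingOfIntegers K),
      A ∈ (Matrix.SpecialLinearGroup.map (Ideal.Quotient.mk I)).ker →
      (algebraMap (NumberField.RingOfIntegers K) K (Matrix.trace A.1) - 2) / 2 ≠ 0 →
      ∀ z : Fin n → UpperHalfPlane,
        Real.sqrt (∑ i, (dist (z i)
            ((Matrix.SpecialLinearGroup.map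
              ((σ i).comp (algebraMap (NumberField.RingOfIntegers K) K)) A) • z i)) ^ 2) ≥
          (4 / Real.sqrt n) * Real.log (Ideal.absNorm I) - 2 * Real.sqrt n * Real.log 40 ∧
        Real.sqrt (∑ i, (dist (z i)
            ((Matrix.SpecialLinearGroup.map
              ((σ i).comp (algebraMap (NumberField.RingOfIntegers K) K)) A) • z i)) ^ 2) ≥
          (4 / (3 * Real.sqrt n)) *
            Real.log ((Matrix.SpecialLinearGroup.map (n := Fin 2)
              (Ideal.Quotient.mk I)).ker.index) - 2 * Real.sqrt n * Real.log 40 := by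
  classical
  set O := NumberField.RingOfIntegers K with hO
  have hn1 : 0 < n := by rw [hn]; exact Module.finrank_pos
  set N : ℕ := Ideal.absNorm I with hNdef
  -- N ≥ 2
  have h40 : (2:ℝ) ≤ (40:ℝ) ^ ((n:ℝ)/2) := by
    have hhalf : ((1:ℝ)/2) ≤ (n:ℝ)/2 := by
      have : (1:ℝ) ≤ n := by exact_mod_cast hn1
      linarith
    have hstep : (40:ℝ) ^ ((1:ℝ)/2) ≤ (40:ℝ) ^ ((n:ℝ)/2) :=
      Real.rpow_le_rpow_of_exponent_le (by norm_num) hhalf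
    have hsq40 : (40:ℝ) ^ ((1:ℝ)/2) = Real.sqrt 40 := (Real.sqrt_eq_rpow 40).symm
    have h2sqrt : (2:ℝ) ≤ Real.sqrt 40 := by
      have h1 : Real.sqrt 40 * Real.sqrt 40 = 40 := Real.mul_self_sqrt (by norm_num)
      nlinarith [Real.sqrt_nonneg (40:ℝ)]
    calc (2:ℝ) ≤ Real.sqrt 40 := h2sqrt
      _ = (40:ℝ) ^ ((1:ℝ)/2) := hsq40.symm
      _ ≤ (40:ℝ) ^ ((n:ℝ)/2) := hstep
  have hN2R : (2:ℝ) ≤ (N:ℝ) := le_trans h40 hnorm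
  have hN2 : 2 ≤ N := by exact_mod_cast hN2R
  have hNfin : Finite (O ⧸ I) := by
    rw [← Ideal.absNorm_ne_zero_iff]
    omega
  have hcardQ : Nat.card (O ⧸ I) = N := by
    rw [hNdef, Ideal.absNorm_apply, Submodule.cardQuot_apply]
  -- Part 1 : index bound
  have hindex : (Matrix.SpecialLinearGroup.map (n := Fin 2)
      (Ideal.Quotient.mk I)).ker.index < N ^ 3 := by
    rw [Subgroup.index_ker]
    have h1 : Nat.card (Matrix.SpecialLinearGroup.map (n := Fin 2)
        (Ideal.Quotient.mk I)).range
        ≤ Nat.card (SpecialLinearGroup (Fin 2) (O ⧸ I)) :=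
      Nat.card_le_card_of_injective _ Subtype.val_injective
    have h2 : Nat.card (SpecialLinearGroup (Fin 2) (O ⧸ I)) < Nat.card (O ⧸ I) ^ 3 :=
      aux_sl2_card_lt (by rw [hcardQ]; exact hN2)
    rw [hcardQ] at h2
    omega
  have hidx_pos : 0 < (Matrix.SpecialLinearGroup.map (n := Fin 2)
      (Ideal.Quotient.mk I)).ker.index := by
    rw [Subgroup.index_ker]
    exact Nat.card_pos
  refine ⟨hindex, ?_⟩
  intro A hA hy0 z
  -- entries of A mod I
  have hA1 : ∀ i j, Ideal.Quotient.mk I (A.1 i j)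
      = (1 : Matrix (Fin 2) (Fin 2) (O ⧸ I)) i j := by
    intro i j
    rw [MonoidHom.mem_ker] at hA
    have h1 : Matrix.SpecialLinearGroup.map (n := Fin 2) (Ideal.Quotient.mk I) A = 1 := hA
    have := congrArg (fun M : SpecialLinearGroup (Fin 2) (O ⧸ I) =>
      (M : Matrix (Fin 2) (Fin 2) (O ⧸ I)) i j) h1
    simpa [Matrix.SpecialLinearGroup.map_apply_coe, RingHom.mapMatrix_apply,
      Matrix.map_apply] using this
  have h00 : A.1 0 0 - 1 ∈ I := by
    rw [← Ideal.Quotient.eq_zero_iff_mem, _root_.map_sub, _root_.map_one, hA1 0 0]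
    simp
  have h11 : A.1 1 1 - 1 ∈ I := by
    rw [← Ideal.Quotient.eq_zero_iff_mem, _root_.map_sub, _root_.map_one, hA1 1 1]
    simp
  have h01 : A.1 0 1 ∈ I := by
    rw [← Ideal.Quotient.eq_zero_iff_mem, hA1 0 1]
    simp [Matrix.one_apply_ne]
  have h10 : A.1 1 0 ∈ I := by
    rw [← Ideal.Quotient.eq_zero_iff_mem, hA1 1 0]
    simp [Matrix.one_apply_ne]
  set tO : O := A.1 0 0 + A.1 1 1 - 2 with htOdef
  have hdetA : A.1 0 0 * A.1 1 1 - A.1 0 1 * A.1 1 0 = 1 := by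
    have := A.prop
    rwa [Matrix.det_fin_two] at this
  have htO2 : tO ∈ I ^ 2 := by
    have heq : tO = A.1 0 1 * A.1 1 0 - (A.1 0 0 - 1) * (A.1 1 1 - 1) := by
      rw [htOdef]
      linear_combination hdetA
    rw [heq, sq]
    exact Submodule.sub_mem _ (Ideal.mul_mem_mul h01 h10) (Ideal.mul_mem_mul h00 h11)
  set tK : K := algebraMap O K tO with htKdef
  have htKeq : tK = algebraMap O K (Matrix.trace A.1) - 2 := by
    rw [htKdef, htOdef, Matrix.trace_fin_two, _root_.map_sub, _root_.map_add, map_ofNat]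
  have htK : tK ≠ 0 := by
    intro h0
    apply hy0
    rw [← htKeq, h0]
    norm_num
  have htO0 : tO ≠ 0 := by
    intro h0
    apply htK
    rw [htKdef, h0, map_zero]
  -- traces of embedded matrices
  have htr : ∀ i : Fin n,
      (Matrix.SpecialLinearGroup.map ((σ i).comp (algebraMap O K)) A) 0 0
      + (Matrix.SpecialLinearGroup.map ((σ i).comp (algebraMap O K)) A) 1 1
      = 2 + σ i tK := by
    intro i
    have h1 : ∀ u v : Fin 2,
        (Matrix.SpecialLinearGroup.map ((σ i).comp (algebraMap O K)) A) u v
        = σ i (algebraMap O K (A.1 u v)) := by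
      intro u v
      simp [Matrix.SpecialLinearGroup.map_apply_coe, RingHom.mapMatrix_apply,
        Matrix.map_apply]
    rw [h1 0 0, h1 1 1, htKdef, htOdef]
    rw [map_sub, map_add, map_sub, map_add]
    have h2 : σ i (algebraMap O K (2 : O)) = 2 := by
      rw [map_ofNat, map_ofNat]
    rw [h2]
    ring
  set d : Fin n → ℝ := fun i => dist (z i)
    ((Matrix.SpecialLinearGroup.map ((σ i).comp (algebraMap O K)) A) • z i) with hddef
  have hd : ∀ i, 2 * Real.log (|σ i tK| / 4) ≤ d i := fun i =>
    aux_dist_ge _ _ _ (htr i)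
  have hdnn : ∀ i, 0 ≤ d i := fun i => dist_nonneg
  -- norm bound
  have hprod : ∏ i, σ i tK = ((Algebra.norm ℚ tK : ℚ) : ℝ) :=
    aux_prod_embeddings hn σ tK
  have hdvd : ((N:ℤ))^2 ∣ Algebra.norm ℤ tO := by
    have h1 := Ideal.absNorm_dvd_norm_of_mem htO2
    rwa [map_pow, Nat.cast_pow] at h1
  have hnormeq : ((Algebra.norm ℤ tO : ℤ) : ℚ) = Algebra.norm ℚ tK := by
    rw [htKdef, ← NumberField.RingOfIntegers.coe_eq_algebraMap]
    exact Algebra.coe_norm_int tO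
  have hnormne : Algebra.norm ℤ tO ≠ 0 := by
    intro h0
    have h1 : Algebra.norm ℚ tK = 0 := by
      rw [← hnormeq, h0]
      norm_num
    exact (Algebra.norm_ne_zero_iff.mpr htK) h1
  have habs2 : ((N:ℝ))^2 ≤ |((Algebra.norm ℚ tK : ℚ) : ℝ)| := by
    have h1 : ((N:ℤ))^2 ≤ |Algebra.norm ℤ tO| :=
      Int.le_of_dvd (abs_pos.mpr hnormne) ((dvd_abs _ _).mpr hdvd)
    have h2 : |((Algebra.norm ℚ tK : ℚ) : ℝ)| = |((Algebra.norm ℤ tO : ℤ) : ℝ)| := by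
      rw [← hnormeq]
      norm_cast
    rw [h2, ← Int.cast_abs]
    exact_mod_cast h1
  have hPpos : (0:ℝ) < |((Algebra.norm ℚ tK : ℚ) : ℝ)| :=
    lt_of_lt_of_le (by positivity) habs2
  have hsigne : ∀ i : Fin n, σ i tK ≠ 0 := by
    intro i h
    exact htK ((σ i).injective (by rw [h, map_zero]))
  have hlogsum : ∑ i, Real.log (|σ i tK| / 4)
      = Real.log |((Algebra.norm ℚ tK : ℚ) : ℝ)| - n * Real.log 4 := by
    rw [← Real.log_prod (fun i _ =>
      div_ne_zero (abs_ne_zero.mpr (hsigne i)) (by norm_num))]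
    rw [Finset.prod_div_distrib, Finset.prod_const, Finset.card_univ, Fintype.card_fin,
      ← Finset.abs_prod, hprod]
    rw [Real.log_div hPpos.ne' (by positivity), Real.log_pow]
  have hlogP : 2 * Real.log (N:ℝ) ≤ Real.log |((Algebra.norm ℚ tK : ℚ) : ℝ)| := by
    have h1 : Real.log (((N:ℝ))^2) ≤ Real.log |((Algebra.norm ℚ tK : ℚ) : ℝ)| :=
      Real.log_le_log (by positivity) habs2
    rwa [Real.log_pow, Nat.cast_ofNat] at h1
  have hD : 4 * Real.log (N:ℝ) - 2 * n * Real.log 4 ≤ ∑ i, d i := by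
    have h1 : 2 * ∑ i, Real.log (|σ i tK| / 4) ≤ ∑ i, d i := by
      rw [Finset.mul_sum]
      exact Finset.sum_le_sum fun i _ => hd i
    rw [hlogsum] at h1
    linarith [hlogP]
  have hlog440 : Real.log 4 ≤ Real.log 40 := Real.log_le_log (by norm_num) (by norm_num)
  have hlog4nn : (0:ℝ) ≤ Real.log 4 := Real.log_nonneg (by norm_num)
  have hD40 : 4 * Real.log (N:ℝ) - 2 * n * Real.log 40 ≤ ∑ i, d i := by
    have hn0 : (0:ℝ) ≤ n := Nat.cast_nonneg n
    nlinarith [hD]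
  set s := Real.sqrt (∑ i, d i ^ 2) with hsdef
  have hsnn : 0 ≤ s := Real.sqrt_nonneg _
  have hCS : ∑ i, d i ≤ Real.sqrt n * s := by
    have h1 : (∑ i, d i)^2 ≤ (n:ℝ) * ∑ i, d i^2 := by
      have h := sq_sum_le_card_mul_sum_sq (s := (Finset.univ : Finset (Fin n))) (f := d)
      simpa [Finset.card_univ] using h
    calc ∑ i, d i = Real.sqrt ((∑ i, d i)^2) :=
          (Real.sqrt_sq (Finset.sum_nonneg fun i _ => hdnn i)).symm
      _ ≤ Real.sqrt ((n:ℝ) * ∑ i, d i^2) := Real.sqrt_le_sqrt h1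
      _ = Real.sqrt n * s := by rw [← Real.sqrt_mul (by positivity)]
  have hsqn : (0:ℝ) < Real.sqrt n := Real.sqrt_pos.mpr (by exact_mod_cast hn1)
  have hss : Real.sqrt n * Real.sqrt n = (n:ℝ) := Real.mul_self_sqrt (by positivity)
  have hgoal1 : (4 / Real.sqrt n) * Real.log (N:ℝ) - 2 * Real.sqrt n * Real.log 40 ≤ s := by
    have key : 4 * Real.log (N:ℝ) - 2 * n * Real.log 40 ≤ s * Real.sqrt n := by
      calc 4 * Real.log (N:ℝ) - 2 * n * Real.log 40 ≤ ∑ i, d i := hD40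
        _ ≤ Real.sqrt n * s := hCS
        _ = s * Real.sqrt n := mul_comm _ _
    have h2 : (4 * Real.log (N:ℝ) - 2 * n * Real.log 40) / Real.sqrt n ≤ s :=
      (div_le_iff₀ hsqn).mpr key
    have h3 : (4 / Real.sqrt n) * Real.log (N:ℝ) - 2 * Real.sqrt n * Real.log 40
        = (4 * Real.log (N:ℝ) - 2 * n * Real.log 40) / Real.sqrt n := by
      rw [eq_div_iff hsqn.ne', sub_mul, div_mul_eq_mul_div, div_mul_cancel₀ _ hsqn.ne']
      rw [show 2 * Real.sqrt n * Real.log 40 * Real.sqrt n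
          = 2 * (Real.sqrt n * Real.sqrt n) * Real.log 40 from by ring, hss]
    rw [h3]
    exact h2
  set m := (Matrix.SpecialLinearGroup.map (n := Fin 2)
      (Ideal.Quotient.mk I)).ker.index with hmdef
  have hlogm : Real.log (m:ℝ) ≤ 3 * Real.log (N:ℝ) := by
    have h1 : ((m:ℕ):ℝ) ≤ ((N:ℝ))^3 := by
      have := hindex.le
      exact_mod_cast this
    have h2 : Real.log (m:ℝ) ≤ Real.log (((N:ℝ))^3) :=
      Real.log_le_log (by exact_mod_cast hidx_pos) h1
    rwa [Real.log_pow, Nat.cast_ofNat] at h2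
  have hgoal2 : (4 / (3 * Real.sqrt n)) * Real.log (m:ℝ)
      - 2 * Real.sqrt n * Real.log 40 ≤ s := by
    have h1 : (4 / (3 * Real.sqrt n)) * Real.log (m:ℝ)
        ≤ (4 / (3 * Real.sqrt n)) * (3 * Real.log (N:ℝ)) :=
      mul_le_mul_of_nonneg_left hlogm (by positivity)
    have h2 : (4 / (3 * Real.sqrt n)) * (3 * Real.log (N:ℝ))
        = (4 / Real.sqrt n) * Real.log (N:ℝ) := by
      field_simp
    linarith [hgoal1]
  exact ⟨hgoal1, hgoal2⟩
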